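/- Let the cost vectors a_1, a_2, … be i.i.d. random vectors in ℝ^d with mean a = E[a_1] ≠ 0, satisfying ‖a_n‖ ≤ L and ‖a_n − a‖ ≤ R almost surely. Let x_1, x_2, … be the actions of the lazy anytime Subgradient algorithm on the closed Euclidean unit ball with base point y_1 = 0 and parameter η > 0, let x* = −a/‖a‖, and set M = ⌈4/(η²‖a‖²) + 8R²/‖a‖²⌉. Then Σ_{i=1}^M E[a·(x_i − x*)] ≤ 2L + (1/(2η) + 2η·L² + √(2π)·R)·(1 + 2/(η‖a‖) + 2√2·R/‖a‖). -/

import Mathlib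

open Finset MeasureTheory ProbabilityTheory
open scoped RealInnerProductSpace

/-- `IsProjOn X p q` says that `q` is the Euclidean nearest-point projection of `p`
onto the set `X`. -/
def IsProjOn {d : ℕ} (X : Set (EuclideanSpace ℝ (Fin d)))
    (p q : EuclideanSpace ℝ (Fin d)) : Prop :=
  q ∈ X ∧ ∀ z ∈ X, ‖p - q‖ ≤ ‖p - z‖

variable {d : ℕ}

noncomputable def projBall (p : EuclideanSpace ℝ (Fin d)) : EuclideanSpace ℝ (Fin d) :=
  if ‖p‖ ≤ 1 then p else ‖p‖⁻¹ • p

lemma measurable_projBall : Measurable (projBall (d := d)) := by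
  have h1 : MeasurableSet {p : EuclideanSpace ℝ (Fin d) | ‖p‖ ≤ 1} :=
    (isClosed_le continuous_norm continuous_const).measurableSet
  exact Measurable.ite h1 measurable_id ((measurable_norm.inv).smul measurable_id)

lemma norm_projBall_le (p : EuclideanSpace ℝ (Fin d)) : ‖projBall p‖ ≤ 1 := by
  unfold projBall
  split_ifs with h
  · exact h
  · push_neg at h
    have hp : (0:ℝ) < ‖p‖ := lt_trans one_pos h
    rw [norm_smul, norm_inv, norm_norm, inv_mul_cancel₀ hp.ne']

lemma projBall_vi (p : EuclideanSpace ℝ (Fin d)) (z : EuclideanSpace ℝ (Fin d)) (hz : ‖z‖ ≤ 1) :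
    ⟪p - projBall p, z - projBall p⟫ ≤ 0 := by
  unfold projBall
  split_ifs with h
  · simp
  · push_neg at h
    have hp : (0:ℝ) < ‖p‖ := lt_trans one_pos h
    have h1 : p - ‖p‖⁻¹ • p = (1 - ‖p‖⁻¹) • p := by
      rw [sub_smul, one_smul]
    rw [h1, real_inner_smul_left, inner_sub_right, real_inner_smul_right,
      real_inner_self_eq_norm_sq]
    have h2 : ⟪p, z⟫ ≤ ‖p‖ := by
      calc ⟪p, z⟫ ≤ ‖p‖ * ‖z‖ := real_inner_le_norm p z
      _ ≤ ‖p‖ * 1 := by nlinarith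
      _ = ‖p‖ := mul_one _
    have h3 : (0:ℝ) ≤ 1 - ‖p‖⁻¹ := by
      rw [sub_nonneg]
      exact inv_le_one_of_one_le₀ h.le
    have h4 : ⟪p, z⟫ - ‖p‖⁻¹ * ‖p‖ ^ 2 ≤ 0 := by
      have : ‖p‖⁻¹ * ‖p‖ ^ 2 = ‖p‖ := by field_simp
      rw [this]; linarith
    exact mul_nonpos_of_nonneg_of_nonpos h3 h4

set_option maxHeartbeats 1000000 in
lemma isProjOn_vi {p q : EuclideanSpace ℝ (Fin d)}
    (h : IsProjOn (Metric.closedBall 0 1) p q) :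
    ∀ z : EuclideanSpace ℝ (Fin d), ‖z‖ ≤ 1 → ⟪p - q, z - q⟫ ≤ 0 := by
  obtain ⟨hq, hmin⟩ := h
  have hconv : Convex ℝ (Metric.closedBall (0 : EuclideanSpace ℝ (Fin d)) 1) :=
    convex_closedBall 0 1
  have hne : Nonempty (Metric.closedBall (0 : EuclideanSpace ℝ (Fin d)) 1) := ⟨⟨q, hq⟩⟩
  have hbdd : BddBelow (Set.range fun w : Metric.closedBall (0 : EuclideanSpace ℝ (Fin d)) 1 =>
      ‖p - (w : EuclideanSpace ℝ (Fin d))‖) := by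
    refine ⟨0, ?_⟩
    rintro r ⟨w, rfl⟩
    exact norm_nonneg _
  have hiInf : ‖p - q‖ = ⨅ w : Metric.closedBall (0 : EuclideanSpace ℝ (Fin d)) 1, ‖p - w‖ := by
    apply le_antisymm
    · exact le_ciInf fun w => hmin w w.2
    · exact ciInf_le hbdd ⟨q, hq⟩
  have hch := (norm_eq_iInf_iff_real_inner_le_zero hconv hq).1 hiInf
  intro z hz
  exact hch z (by simpa [Metric.mem_closedBall, dist_zero_right] using hz)


lemma isProjOn_eq {p q : EuclideanSpace ℝ (Fin d)}
    (h : IsProjOn (Metric.closedBall 0 1) p q) : q = projBall p := by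
  have h1 := isProjOn_vi h (projBall p) (norm_projBall_le p)
  have h2 := projBall_vi p q (by simpa [Metric.mem_closedBall, dist_zero_right] using h.1)
  have e : ⟪p - q, projBall p - q⟫ + ⟪p - projBall p, q - projBall p⟫
      = ‖projBall p - q‖ ^ 2 := by
    rw [← real_inner_self_eq_norm_sq]
    simp only [inner_sub_left, inner_sub_right]
    ring
  have h0 : ‖projBall p - q‖ = 0 := by
    have hn := norm_nonneg (projBall p - q)
    nlinarith
  have : projBall p - q = 0 := norm_eq_zero.1 h0
  have := sub_eq_zero.1 this
  exact this.symm
variable {d : ℕ}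

lemma opt_of_vi {S q : EuclideanSpace ℝ (Fin d)} {c : ℝ} (hc : 0 < c)
    (h : ∀ z : EuclideanSpace ℝ (Fin d), ‖z‖ ≤ 1 → ⟪(0:EuclideanSpace ℝ (Fin d)) - c⁻¹ • S - q, z - q⟫ ≤ 0) :
    ∀ z : EuclideanSpace ℝ (Fin d), ‖z‖ ≤ 1 →
      c/2 * ‖q‖^2 + ⟪S, q⟫ + c/2 * ‖z - q‖^2 ≤ c/2 * ‖z‖^2 + ⟪S, z⟫ := by
  intro z hz
  have h1 := h z hz
  have h2 : 0 ≤ c⁻¹ * ⟪S, z - q⟫ + ⟪q, z - q⟫ := by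
    have he : ⟪(0:EuclideanSpace ℝ (Fin d)) - c⁻¹ • S - q, z - q⟫
        = -(c⁻¹ * ⟪S, z - q⟫ + ⟪q, z - q⟫) := by
      simp only [zero_sub, inner_sub_left, inner_neg_left, real_inner_smul_left]
      ring
    rw [he] at h1
    linarith
  have h3 : 0 ≤ ⟪S, z - q⟫ + c * ⟪q, z - q⟫ := by
    have hm := mul_nonneg hc.le h2
    have he : c * (c⁻¹ * ⟪S, z - q⟫ + ⟪q, z - q⟫) = ⟪S, z - q⟫ + c * ⟪q, z - q⟫ := by
      field_simp
    linarith [he ▸ hm]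
  have hid : ‖z‖^2 = ‖q‖^2 + 2*⟪q, z - q⟫ + ‖z - q‖^2 := by
    have h4 := norm_add_sq_real q (z - q)
    have h5 : q + (z - q) = z := by abel
    rw [h5] at h4
    linarith
  have hid2 : c/2*‖z‖^2 = c/2*‖q‖^2 + c*⟪q, z - q⟫ + c/2*‖z - q‖^2 := by
    rw [hid]; ring
  have hsub : ⟪S, z - q⟫ = ⟪S, z⟫ - ⟪S, q⟫ := inner_sub_right _ _ _
  linarith

set_option maxHeartbeats 2000000 in
lemma det_regret (b xx : ℕ → EuclideanSpace ℝ (Fin d)) (η L : ℝ)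
    (hη : 0 < η) (hL0 : 0 ≤ L) (M : ℕ) (hM : 1 ≤ M)
    (hb : ∀ i, 1 ≤ i → i ≤ M → ‖b i‖ ≤ L)
    (hx1 : xx 1 = 0)
    (hball : ∀ n, 1 ≤ n → n ≤ M → ‖xx (n+1)‖ ≤ 1)
    (hopt : ∀ n, 1 ≤ n → n ≤ M → ∀ z : EuclideanSpace ℝ (Fin d), ‖z‖ ≤ 1 →
      Real.sqrt n/(2*η) * ‖xx (n+1)‖^2 + ⟪∑ i ∈ Icc 1 n, b i, xx (n+1)⟫
        + Real.sqrt n/(2*η) * ‖z - xx (n+1)‖^2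
      ≤ Real.sqrt n/(2*η) * ‖z‖^2 + ⟪∑ i ∈ Icc 1 n, b i, z⟫)
    (u : EuclideanSpace ℝ (Fin d)) (hu : ‖u‖ ≤ 1) :
    ∑ i ∈ Icc 1 M, ⟪b i, xx i - u⟫ ≤ (1/(2*η) + 2*η*L^2) * Real.sqrt M := by
  have claim : ∀ n, 1 ≤ n → n ≤ M →
      ∑ t ∈ Icc 1 n, ⟪b t, xx t⟫ ≤
        Real.sqrt n/(2*η) * ‖xx (n+1)‖^2 + ⟪∑ i ∈ Icc 1 n, b i, xx (n+1)⟫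
          + η*L^2/2*(1 + 2*Real.sqrt ((n:ℝ)-1)) := by
    intro n hn
    induction n, hn using Nat.le_induction with
    | base =>
      intro h1M
      simp only [Finset.Icc_self, Finset.sum_singleton, hx1, inner_zero_right,
        Nat.cast_one, Real.sqrt_one]
      rw [show (1:ℝ) - 1 = 0 by norm_num, Real.sqrt_zero]
      have hBL : ‖b 1‖ ≤ L := hb 1 le_rfl h1M
      have hB0 : (0:ℝ) ≤ ‖b 1‖ := norm_nonneg _
      have hip : -(‖b 1‖ * ‖xx (1+1)‖) ≤ ⟪b 1, xx (1+1)⟫ := by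
        have h1 := abs_real_inner_le_norm (b 1) (xx (1+1))
        have h2 := neg_abs_le ⟪b 1, xx (1+1)⟫
        linarith
      have hq : 0 ≤ (‖xx (1+1)‖ - η*‖b 1‖)^2/(2*η) := by positivity
      have he : (‖xx (1+1)‖ - η*‖b 1‖)^2/(2*η)
          = 1/(2*η)*‖xx (1+1)‖^2 - ‖b 1‖*‖xx (1+1)‖ + η*‖b 1‖^2/2 := by
        field_simp; ring
      have hB2 : ‖b 1‖^2 ≤ L^2 := by nlinarith
      have hBL2 : η*‖b 1‖^2/2 ≤ η*L^2/2 := by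
        nlinarith [mul_le_mul_of_nonneg_left hB2 hη.le]
      linarith
    | succ n hn IH =>
      intro hn1
      have hnM : n ≤ M := le_trans (Nat.le_succ n) hn1
      have IH' := IH hnM
      have hcast : ((n+1:ℕ):ℝ) - 1 = (n:ℝ) := by push_cast; ring
      rw [Finset.sum_Icc_succ_top (by omega : 1 ≤ n+1),
        Finset.sum_Icc_succ_top (by omega : 1 ≤ n+1), hcast]
      set s := Real.sqrt (n:ℝ) with hs
      set s' := Real.sqrt ((n+1:ℕ):ℝ) with hs'def
      set x1 := xx (n+1) with hx1d
      set x2 := xx (n+1+1) with hx2d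
      set cc := b (n+1) with hcc
      set S := ∑ i ∈ Icc 1 n, b i with hSdef
      have hn1' : (1:ℝ) ≤ (n:ℝ) := by exact_mod_cast hn
      have hn0 : (0:ℝ) < (n:ℝ) := by linarith
      have hspos : 0 < s := Real.sqrt_pos.2 hn0
      have hss' : s ≤ s' := Real.sqrt_le_sqrt (by push_cast; linarith)
      have hx2b : ‖x2‖ ≤ 1 := hball (n+1) (by omega) hn1
      have hopt' := hopt n hn hnM x2 hx2b
      have hBL : ‖cc‖ ≤ L := hb (n+1) (by omega) hn1
      have hip : ⟪cc, x1⟫ ≤ ⟪cc, x2⟫ + η/(2*s)*‖cc‖^2 + s/(2*η)*‖x2 - x1‖^2 := by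
        have h1 : ⟪cc, x2⟫ - ⟪cc, x1⟫ = ⟪cc, x2 - x1⟫ := (inner_sub_right _ _ _).symm
        have h2 := abs_real_inner_le_norm cc (x2 - x1)
        have h2' := neg_abs_le ⟪cc, x2 - x1⟫
        have h3 : 0 ≤ (η*‖cc‖ - s*‖x2 - x1‖)^2/(2*s*η) := by positivity
        have h4 : (η*‖cc‖ - s*‖x2 - x1‖)^2/(2*s*η)
            = η/(2*s)*‖cc‖^2 + s/(2*η)*‖x2 - x1‖^2 - ‖cc‖*‖x2 - x1‖ := by
          field_simp; ring
        linarith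
      have hs2 : s^2 = (n:ℝ) := Real.sq_sqrt hn0.le
      have hkey : Real.sqrt ((n:ℝ)-1) * s ≤ (n:ℝ) - 1/2 := by
        have e1 : Real.sqrt ((n:ℝ)-1) * s = Real.sqrt (((n:ℝ)-1)*(n:ℝ)) :=
          (Real.sqrt_mul (by linarith) _).symm
        have e2 : Real.sqrt (((n:ℝ)-1)*(n:ℝ)) ≤ Real.sqrt (((n:ℝ)-1/2)^2) :=
          Real.sqrt_le_sqrt (by nlinarith)
        have e3 : Real.sqrt (((n:ℝ)-1/2)^2) = (n:ℝ)-1/2 := Real.sqrt_sq (by linarith)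
        linarith
      have hgap : η/(2*s)*‖cc‖^2 ≤ η*L^2*(s - Real.sqrt ((n:ℝ)-1)) := by
        have hc2 : ‖cc‖^2 ≤ L^2 := by nlinarith [norm_nonneg cc]
        have h2s : 1/(2*s) ≤ s - Real.sqrt ((n:ℝ)-1) := by
          rw [div_le_iff₀ (by positivity)]
          nlinarith
        have l1 : η/(2*s)*‖cc‖^2 ≤ η/(2*s)*L^2 :=
          mul_le_mul_of_nonneg_left hc2 (by positivity)
        have l2 : η/(2*s)*L^2 = (η*L^2)*(1/(2*s)) := by ring
        have l3 : (η*L^2)*(1/(2*s)) ≤ (η*L^2)*(s - Real.sqrt ((n:ℝ)-1)) :=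
          mul_le_mul_of_nonneg_left h2s (by positivity)
        linarith
      have hmono : s/(2*η)*‖x2‖^2 ≤ s'/(2*η)*‖x2‖^2 := by
        apply mul_le_mul_of_nonneg_right _ (sq_nonneg _)
        exact (div_le_div_iff_of_pos_right (by positivity)).2 hss'
      have hSadd : ⟪S + cc, x2⟫ = ⟪S, x2⟫ + ⟪cc, x2⟫ := inner_add_left _ _ _
      linarith
  have hclaimM := claim M hM le_rfl
  have hoptM := hopt M hM le_rfl u hu
  have hrw : ∑ i ∈ Icc 1 M, ⟪b i, xx i - u⟫
      = ∑ i ∈ Icc 1 M, ⟪b i, xx i⟫ - ⟪∑ i ∈ Icc 1 M, b i, u⟫ := by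
    rw [Finset.sum_congr rfl (fun i _ => inner_sub_right (b i) (xx i) u),
      Finset.sum_sub_distrib, sum_inner]
  rw [hrw]
  set sM := Real.sqrt (M:ℝ) with hsM
  have hM1 : (1:ℝ) ≤ (M:ℝ) := by exact_mod_cast hM
  have h1sM : 1 ≤ sM := by
    rw [hsM, show (1:ℝ) = Real.sqrt 1 by rw [Real.sqrt_one]]
    exact Real.sqrt_le_sqrt hM1
  have h2sM : Real.sqrt ((M:ℝ)-1) ≤ sM := Real.sqrt_le_sqrt (by linarith)
  have hu2 : ‖u‖^2 ≤ 1 := by nlinarith [norm_nonneg u]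
  have hc1 : sM/(2*η)*‖u‖^2 ≤ sM/(2*η)*1 :=
    mul_le_mul_of_nonneg_left hu2 (by positivity)
  have hsl1 : η*L^2/2*(1 + 2*Real.sqrt ((M:ℝ)-1)) ≤ η*L^2/2*(3*sM) :=
    mul_le_mul_of_nonneg_left (by linarith) (by positivity)
  have hpos : 0 ≤ η*L^2*sM := by positivity
  have hdrop : 0 ≤ sM/(2*η)*‖u - xx (M+1)‖^2 := by positivity
  have step1 : ∑ i ∈ Icc 1 M, ⟪b i, xx i⟫ - ⟪∑ i ∈ Icc 1 M, b i, u⟫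
      ≤ sM/(2*η)*‖u‖^2 + η*L^2/2*(1 + 2*Real.sqrt ((M:ℝ)-1)) := by
    linarith
  have hfin : sM/(2*η)*‖u‖^2 + η*L^2/2*(1 + 2*Real.sqrt ((M:ℝ)-1))
      ≤ (1/(2*η) + 2*η*L^2)*sM := by
    have e1 : sM/(2*η)*‖u‖^2 = 1/(2*η)*(sM*‖u‖^2) := by ring
    have e2 : (1/(2*η) + 2*η*L^2)*sM = 1/(2*η)*sM + 2*η*L^2*sM := by ring
    have hsM0 : 0 ≤ sM := by linarith
    have e3 : sM*‖u‖^2 ≤ sM := by nlinarith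
    have e4 : 1/(2*η)*(sM*‖u‖^2) ≤ 1/(2*η)*sM :=
      mul_le_mul_of_nonneg_left e3 (by positivity)
    rw [e1, e2]
    linarith
  linarith [step1, hfin]
variable {d : ℕ}

lemma coord_le_norm (v : EuclideanSpace ℝ (Fin d)) (k : Fin d) : |v k| ≤ ‖v‖ := by
  rw [EuclideanSpace.norm_eq]
  have h1 : |v k| = Real.sqrt (|v k|^2) := by
    rw [Real.sqrt_sq_eq_abs, abs_abs]
  rw [h1]
  apply Real.sqrt_le_sqrt
  rw [sq_abs]
  calc v k ^ 2 ≤ ∑ j, v j ^ 2 :=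
        Finset.single_le_sum (f := fun j => v j ^ 2) (fun j _ => sq_nonneg _) (Finset.mem_univ k)
    _ = ∑ j, ‖v j‖ ^ 2 := by simp [Real.norm_eq_abs, sq_abs]

lemma inner_coords (v w : EuclideanSpace ℝ (Fin d)) : ⟪v, w⟫ = ∑ k, v k * w k := by
  simp [PiLp.inner_apply, RCLike.inner_apply]
  exact Finset.sum_congr rfl (fun _ _ => mul_comm _ _)

lemma sqrt_add_le' {x y : ℝ} (hx : 0 ≤ x) (hy : 0 ≤ y) :
    Real.sqrt (x + y) ≤ Real.sqrt x + Real.sqrt y := by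
  have h : Real.sqrt (x+y) ≤ Real.sqrt ((Real.sqrt x + Real.sqrt y)^2) := by
    apply Real.sqrt_le_sqrt
    nlinarith [Real.sq_sqrt hx, Real.sq_sqrt hy, Real.sqrt_nonneg x, Real.sqrt_nonneg y,
      mul_nonneg (Real.sqrt_nonneg x) (Real.sqrt_nonneg y)]
  rwa [Real.sqrt_sq (by positivity)] at h
set_option maxHeartbeats 4000000 in
/-- Lemma 6: the pseudo-regret of Subgradient on the unit ball over the initial segment
of turns `1, …, M` for `M = ⌈4/(η²‖a‖²) + 8R²/‖a‖²⌉`. -/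
theorem ball_initial_segment {d : ℕ}
    {Ω : Type*} [MeasurableSpace Ω] (μ : Measure Ω) [IsProbabilityMeasure μ]
    (A : ℕ → Ω → EuclideanSpace ℝ (Fin d))
    (hmeas : ∀ n, Measurable (A n))
    (hindep : iIndepFun A μ)
    (hident : ∀ n, IdentDistrib (A n) (A 1) μ μ)
    (a : EuclideanSpace ℝ (Fin d)) (ha : a ≠ 0)
    (hmean : ∀ n, ∫ ω, A n ω ∂μ = a)
    (L R : ℝ)
    (hL : ∀ n, ∀ᵐ ω ∂μ, ‖A n ω‖ ≤ L)
    (hR : ∀ n, ∀ᵐ ω ∂μ, ‖A n ω - a‖ ≤ R)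
    (η : ℝ) (hη : 0 < η)
    (x : ℕ → Ω → EuclideanSpace ℝ (Fin d))
    (hx1 : ∀ ω, IsProjOn (Metric.closedBall (0 : EuclideanSpace ℝ (Fin d)) 1)
      (0 : EuclideanSpace ℝ (Fin d)) (x 1 ω))
    (hxn : ∀ n, 2 ≤ n → ∀ ω,
      IsProjOn (Metric.closedBall (0 : EuclideanSpace ℝ (Fin d)) 1)
        ((0 : EuclideanSpace ℝ (Fin d)) -
          (η / Real.sqrt ((n - 1 : ℕ) : ℝ)) • ∑ i ∈ Icc 1 (n - 1), A i ω)
        (x n ω)) :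
    ∑ i ∈ Icc 1 ⌈4 / (η ^ 2 * ‖a‖ ^ 2) + 8 * R ^ 2 / ‖a‖ ^ 2⌉₊,
        ∫ ω, ⟪a, x i ω - (-(‖a‖⁻¹ • a))⟫ ∂μ ≤
      2 * L + (1 / (2 * η) + 2 * η * L ^ 2 + Real.sqrt (2 * Real.pi) * R) *
        (1 + 2 / (η * ‖a‖) + 2 * Real.sqrt 2 * R / ‖a‖) := by
  classical
  have hanorm : (0:ℝ) < ‖a‖ := norm_pos_iff.2 ha
  set xs : EuclideanSpace ℝ (Fin d) := -(‖a‖⁻¹ • a) with hxs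
  have hxsnorm : ‖xs‖ = 1 := by
    rw [hxs, norm_neg, norm_smul, norm_inv, norm_norm, inv_mul_cancel₀ hanorm.ne']
  set M := ⌈4 / (η ^ 2 * ‖a‖ ^ 2) + 8 * R ^ 2 / ‖a‖ ^ 2⌉₊ with hMdef
  haveI : (ae μ).NeBot := ae_neBot.2 (IsProbabilityMeasure.ne_zero μ)
  have hR0 : 0 ≤ R := by
    obtain ⟨ω, hω⟩ := (hR 1).exists
    exact le_trans (norm_nonneg _) hω
  have hL0 : 0 ≤ L := by
    obtain ⟨ω, hω⟩ := (hL 1).exists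
    exact le_trans (norm_nonneg _) hω
  have hm'pos : 0 < 4 / (η ^ 2 * ‖a‖ ^ 2) + 8 * R ^ 2 / ‖a‖ ^ 2 := by positivity
  have hM0 : 0 < M := by rw [hMdef]; exact Nat.ceil_pos.2 hm'pos
  have hM1 : 1 ≤ M := hM0
  -- x 1 is 0
  have hx1z : ∀ ω, x 1 ω = 0 := by
    intro ω
    have h := (hx1 ω).2 0 (by simp)
    have h2 : ‖x 1 ω‖ ≤ 0 := by simpa [zero_sub, norm_neg] using h
    simpa using norm_le_zero_iff.1 h2
  -- ball membership
  have hxball : ∀ n, 2 ≤ n → ∀ ω, ‖x n ω‖ ≤ 1 := fun n hn ω => by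
    have := (hxn n hn ω).1
    simpa [Metric.mem_closedBall, dist_zero_right] using this
  have hxball1 : ∀ n ω, ‖x (n+1) ω‖ ≤ 1 := by
    intro n ω
    rcases Nat.eq_zero_or_pos n with h0 | hpos
    · subst h0; rw [hx1z ω]; simp
    · exact hxball (n+1) (by omega) ω
  -- explicit formula
  have hxeq : ∀ n, 2 ≤ n → ∀ ω, x n ω =
      projBall ((0:EuclideanSpace ℝ (Fin d)) -
        (η / Real.sqrt ((n - 1 : ℕ) : ℝ)) • ∑ i ∈ Icc 1 (n - 1), A i ω) :=
    fun n hn ω => isProjOn_eq (hxn n hn ω)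
  -- measurability of x
  have hxm : ∀ n, Measurable (x (n+1)) := by
    intro n
    rcases Nat.eq_zero_or_pos n with h0 | hpos
    · subst h0
      have : x 1 = fun _ => (0:EuclideanSpace ℝ (Fin d)) := funext hx1z
      rw [this]; exact measurable_const
    · have h2 : 2 ≤ n+1 := by omega
      have he : x (n+1) = fun ω => projBall ((0:EuclideanSpace ℝ (Fin d)) -
          (η / Real.sqrt (((n+1) - 1 : ℕ) : ℝ)) • ∑ i ∈ Icc 1 ((n+1) - 1), A i ω) :=
        funext (hxeq _ h2)
      rw [he]
      apply measurable_projBall.comp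
      exact Measurable.sub measurable_const
        ((Finset.measurable_sum _ (fun i _ => hmeas i)).fun_const_smul _)
  -- integrability
  have hAint : ∀ n, Integrable (A n) μ := fun n =>
    ⟨(hmeas n).aestronglyMeasurable, HasFiniteIntegral.of_bounded (hL n)⟩
  have hprojm : ∀ k : Fin d, Measurable (fun v : EuclideanSpace ℝ (Fin d) => v k) :=
    fun k => (EuclideanSpace.proj k (𝕜 := ℝ)).continuous.measurable
  have hAkint : ∀ n k, Integrable (fun ω => A n ω k) μ := by
    intro n k
    refine ⟨((hprojm k).comp (hmeas n)).aestronglyMeasurable,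
      HasFiniteIntegral.of_bounded (C := L) ((hL n).mono fun ω h => ?_)⟩
    simpa [Real.norm_eq_abs] using le_trans (coord_le_norm (A n ω) k) h
  have hAmean : ∀ n k, ∫ ω, A n ω k ∂μ = a k := by
    intro n k
    have h := (EuclideanSpace.proj k (𝕜 := ℝ)).integral_comp_comm (hAint n)
    rw [hmean n] at h
    simpa using h
  have hxkint : ∀ n k, Integrable (fun ω => x (n+1) ω k) μ := by
    intro n k
    refine ⟨((hprojm k).comp (hxm n)).aestronglyMeasurable,
      HasFiniteIntegral.of_bounded (C := 1) (Filter.Eventually.of_forall fun ω => ?_)⟩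
    simpa [Real.norm_eq_abs] using le_trans (coord_le_norm (x (n+1) ω) k) (hxball1 n ω)
  -- the key exchange: E⟪a, x i - xs⟫ = E⟪A i, x i - xs⟫
  have hprodk : ∀ n k, ∫ ω, (A (n+1) ω k) * (x (n+1) ω k) ∂μ
      = a k * ∫ ω, x (n+1) ω k ∂μ := by
    intro n k
    rcases Nat.eq_zero_or_pos n with h0 | hpos
    · subst h0
      have hz : ∀ ω, x 1 ω k = 0 := fun ω => by rw [hx1z ω]; rfl
      simp [hz]
    · have h2 : 2 ≤ n+1 := by omega
      have hnot : (n+1 : ℕ) ∉ Icc 1 ((n+1)-1) := by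
        simp only [Finset.mem_Icc]; omega
      have hS : IndepFun (∑ j ∈ Icc 1 ((n+1)-1), A j) (A (n+1)) μ :=
        hindep.indepFun_finsetSum_of_notMem hmeas hnot
      have hgm : Measurable (fun v : EuclideanSpace ℝ (Fin d) =>
          projBall ((0:EuclideanSpace ℝ (Fin d)) -
            (η / Real.sqrt (((n+1)-1:ℕ):ℝ)) • v)) :=
        measurable_projBall.comp
          (Measurable.sub measurable_const (measurable_const_smul _))
      have hxfun : x (n+1) = (fun v : EuclideanSpace ℝ (Fin d) =>
          projBall ((0:EuclideanSpace ℝ (Fin d)) -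
            (η / Real.sqrt (((n+1)-1:ℕ):ℝ)) • v)) ∘ (∑ j ∈ Icc 1 ((n+1)-1), A j) := by
        funext ω
        rw [hxeq (n+1) h2 ω]
        simp only [Function.comp_apply, Finset.sum_apply]
      have hIx : IndepFun (x (n+1)) (A (n+1)) μ := by
        rw [hxfun]
        exact hS.comp hgm measurable_id
      have hIk : IndepFun (fun ω => A (n+1) ω k) (fun ω => x (n+1) ω k) μ :=
        (hIx.symm).comp (hprojm k) (hprojm k)
      have hmul := hIk.integral_fun_mul_eq_mul_integral (hAkint (n+1) k).1 (hxkint n k).1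
      rw [hAmean (n+1) k] at hmul
      exact hmul
  have hxkmeas : ∀ n k, Measurable (fun ω => x (n+1) ω k) :=
    fun n k => (hprojm k).comp (hxm n)
  have hxint : ∀ n, Integrable (x (n+1)) μ := fun n =>
    ⟨(hxm n).aestronglyMeasurable,
      HasFiniteIntegral.of_bounded (C := 1) (Filter.Eventually.of_forall (hxball1 n))⟩
  have hxintmean : ∀ n k, (∫ ω, x (n+1) ω ∂μ) k = ∫ ω, x (n+1) ω k ∂μ := by
    intro n k
    have h := (EuclideanSpace.proj k (𝕜 := ℝ)).integral_comp_comm (hxint n)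
    simpa using h.symm
  have hABint : ∀ n k, Integrable (fun ω => A (n+1) ω k * x (n+1) ω k) μ := by
    intro n k
    refine ⟨(((hprojm k).comp (hmeas (n+1))).mul ((hprojm k).comp (hxm n))).aestronglyMeasurable,
      HasFiniteIntegral.of_bounded (C := L) ((hL (n+1)).mono fun ω h => ?_)⟩
    have h1 := coord_le_norm (A (n+1) ω) k
    have h2 := coord_le_norm (x (n+1) ω) k
    have h3 := hxball1 n ω
    have h4 : |A (n+1) ω k * x (n+1) ω k| = |A (n+1) ω k| * |x (n+1) ω k| := abs_mul _ _
    have h5 : (0:ℝ) ≤ |A (n+1) ω k| := abs_nonneg _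
    rw [Real.norm_eq_abs, h4]
    nlinarith [abs_nonneg (x (n+1) ω k), norm_nonneg (A (n+1) ω)]
  have hkey : ∀ n : ℕ, ∫ ω, ⟪a, x (n+1) ω - xs⟫ ∂μ
      = ∫ ω, ⟪A (n+1) ω, x (n+1) ω - xs⟫ ∂μ := by
    intro n
    have hsub : Integrable (fun ω => x (n+1) ω - xs) μ := (hxint n).sub (integrable_const xs)
    have h1 : ∫ ω, (x (n+1) ω - xs) ∂μ = (∫ ω, x (n+1) ω ∂μ) - xs := by
      rw [integral_sub (hxint n) (integrable_const xs), integral_const]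
      simp
    have hLHS : ∫ ω, ⟪a, x (n+1) ω - xs⟫ ∂μ = ⟪a, (∫ ω, x (n+1) ω ∂μ) - xs⟫ := by
      rw [integral_inner hsub, h1]
    have hint1 : Integrable (fun ω => ⟪A (n+1) ω, x (n+1) ω⟫) μ := by
      refine ⟨((hmeas (n+1)).inner (hxm n)).aestronglyMeasurable,
        HasFiniteIntegral.of_bounded (C := L) ((hL (n+1)).mono fun ω h => ?_)⟩
      have h1' := abs_real_inner_le_norm (A (n+1) ω) (x (n+1) ω)
      have h3 := hxball1 n ω
      rw [Real.norm_eq_abs]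
      nlinarith [norm_nonneg (A (n+1) ω)]
    have hint2 : Integrable (fun ω => ⟪A (n+1) ω, xs⟫) μ := by
      have he : (fun ω => ⟪A (n+1) ω, xs⟫) = fun ω => ⟪xs, A (n+1) ω⟫ :=
        funext fun ω => real_inner_comm _ _
      rw [he]
      exact (hAint (n+1)).const_inner xs
    have h4 : ∫ ω, ⟪A (n+1) ω, xs⟫ ∂μ = ⟪a, xs⟫ := by
      have he : (fun ω => ⟪A (n+1) ω, xs⟫) = fun ω => ⟪xs, A (n+1) ω⟫ :=
        funext fun ω => real_inner_comm _ _
      rw [he, integral_inner (hAint (n+1)), hmean (n+1), real_inner_comm]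
    have h5 : ∫ ω, ⟪A (n+1) ω, x (n+1) ω⟫ ∂μ = ⟪a, ∫ ω, x (n+1) ω ∂μ⟫ := by
      have e2 : ∀ ω, ⟪A (n+1) ω, x (n+1) ω⟫ = ∑ k, A (n+1) ω k * x (n+1) ω k :=
        fun ω => inner_coords _ _
      calc ∫ ω, ⟪A (n+1) ω, x (n+1) ω⟫ ∂μ
          = ∫ ω, ∑ k, A (n+1) ω k * x (n+1) ω k ∂μ := by simp_rw [e2]
        _ = ∑ k, ∫ ω, A (n+1) ω k * x (n+1) ω k ∂μ :=
            integral_finset_sum _ (fun k _ => hABint n k)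
        _ = ∑ k, a k * ∫ ω, x (n+1) ω k ∂μ :=
            Finset.sum_congr rfl (fun k _ => hprodk n k)
        _ = ∑ k, a k * (∫ ω, x (n+1) ω ∂μ) k :=
            Finset.sum_congr rfl (fun k _ => by rw [hxintmean n k])
        _ = ⟪a, ∫ ω, x (n+1) ω ∂μ⟫ := (inner_coords _ _).symm
    have hRHS : ∫ ω, ⟪A (n+1) ω, x (n+1) ω - xs⟫ ∂μ
        = ⟪a, ∫ ω, x (n+1) ω ∂μ⟫ - ⟪a, xs⟫ := by
      have he : (fun ω => ⟪A (n+1) ω, x (n+1) ω - xs⟫)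
          = fun ω => ⟪A (n+1) ω, x (n+1) ω⟫ - ⟪A (n+1) ω, xs⟫ :=
        funext fun ω => inner_sub_right _ _ _
      rw [he, integral_sub hint1 hint2, h4, h5]
    rw [hLHS, hRHS, inner_sub_right]
  -- rewrite the goal sum
  have hsum1 : ∑ i ∈ Icc 1 M, ∫ ω, ⟪a, x i ω - xs⟫ ∂μ
      = ∑ i ∈ Icc 1 M, ∫ ω, ⟪A i ω, x i ω - xs⟫ ∂μ := by
    refine Finset.sum_congr rfl (fun i hi => ?_)
    have h1i : 1 ≤ i := (Finset.mem_Icc.1 hi).1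
    obtain ⟨n, rfl⟩ : ∃ n, i = n + 1 := ⟨i - 1, by omega⟩
    exact hkey n
  have hsummandint : ∀ i ∈ Icc 1 M, Integrable (fun ω => ⟪A i ω, x i ω - xs⟫) μ := by
    intro i hi
    have h1i : 1 ≤ i := (Finset.mem_Icc.1 hi).1
    obtain ⟨n, rfl⟩ : ∃ n, i = n + 1 := ⟨i - 1, by omega⟩
    refine ⟨((hmeas (n+1)).inner ((hxm n).sub measurable_const)).aestronglyMeasurable,
      HasFiniteIntegral.of_bounded (C := L * 2) ((hL (n+1)).mono fun ω h => ?_)⟩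
    have h1' := abs_real_inner_le_norm (A (n+1) ω) (x (n+1) ω - xs)
    have h2 : ‖x (n+1) ω - xs‖ ≤ 2 := by
      calc ‖x (n+1) ω - xs‖ ≤ ‖x (n+1) ω‖ + ‖xs‖ := norm_sub_le _ _
        _ ≤ 1 + 1 := by rw [hxsnorm]; linarith [hxball1 n ω]
        _ = 2 := by norm_num
    rw [Real.norm_eq_abs]
    nlinarith [norm_nonneg (A (n+1) ω), norm_nonneg (x (n+1) ω - xs)]
  have hswap : ∑ i ∈ Icc 1 M, ∫ ω, ⟪A i ω, x i ω - xs⟫ ∂μ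
      = ∫ ω, ∑ i ∈ Icc 1 M, ⟪A i ω, x i ω - xs⟫ ∂μ :=
    (integral_finset_sum _ hsummandint).symm
  -- almost-sure regret bound
  have hregret : ∀ᵐ ω ∂μ, ∑ i ∈ Icc 1 M, ⟪A i ω, x i ω - xs⟫
      ≤ (1/(2*η) + 2*η*L^2) * Real.sqrt M := by
    filter_upwards [ae_all_iff.2 hL] with ω hωL
    refine det_regret (fun j => A j ω) (fun j => x j ω) η L hη hL0 M hM1
      (fun i _ _ => hωL i) (hx1z ω) (fun n _ _ => hxball1 n ω)
      (fun n hn1 hnM z hz => ?_) xs (le_of_eq hxsnorm)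
    have hn1' : (1:ℝ) ≤ (n:ℝ) := by exact_mod_cast hn1
    have hs : 0 < Real.sqrt (n:ℝ) := Real.sqrt_pos.2 (by linarith)
    have hc : 0 < Real.sqrt (n:ℝ) / η := div_pos hs hη
    have hvi := isProjOn_vi (hxn (n+1) (by omega) ω)
    rw [Nat.add_sub_cancel] at hvi
    have hvi' : ∀ w : EuclideanSpace ℝ (Fin d), ‖w‖ ≤ 1 →
        ⟪(0:EuclideanSpace ℝ (Fin d)) - (Real.sqrt (n:ℝ) / η)⁻¹ • (∑ i ∈ Icc 1 n, A i ω)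
          - x (n+1) ω, w - x (n+1) ω⟫ ≤ 0 := by
      intro w hw
      rw [inv_div]
      exact hvi w hw
    have hoo := opt_of_vi hc hvi' z hz
    have e : Real.sqrt (n:ℝ) / η / 2 = Real.sqrt (n:ℝ) / (2*η) := by ring
    rw [e] at hoo
    exact hoo
  -- integrate the bound
  have hmain : ∑ i ∈ Icc 1 M, ∫ ω, ⟪a, x i ω - xs⟫ ∂μ
      ≤ (1/(2*η) + 2*η*L^2) * Real.sqrt M := by
    rw [hsum1, hswap]
    have hint : Integrable (fun ω => ∑ i ∈ Icc 1 M, ⟪A i ω, x i ω - xs⟫) μ :=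
      integrable_finset_sum _ hsummandint
    have h := integral_mono_ae hint (integrable_const ((1/(2*η) + 2*η*L^2) * Real.sqrt M)) hregret
    simpa using h
  -- numeric endgame
  have hFle : Real.sqrt (M:ℝ) ≤ 1 + 2/(η*‖a‖) + 2*Real.sqrt 2*R/‖a‖ := by
    have hceil : (M:ℝ) ≤ (4 / (η ^ 2 * ‖a‖ ^ 2) + 8 * R ^ 2 / ‖a‖ ^ 2) + 1 := by
      rw [hMdef]
      exact (Nat.ceil_lt_add_one hm'pos.le).le
    have h1 : Real.sqrt (M:ℝ)
        ≤ Real.sqrt ((4 / (η ^ 2 * ‖a‖ ^ 2) + 8 * R ^ 2 / ‖a‖ ^ 2) + 1) :=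
      Real.sqrt_le_sqrt hceil
    have h2 : Real.sqrt ((4 / (η ^ 2 * ‖a‖ ^ 2) + 8 * R ^ 2 / ‖a‖ ^ 2) + 1)
        ≤ Real.sqrt (4 / (η ^ 2 * ‖a‖ ^ 2) + 8 * R ^ 2 / ‖a‖ ^ 2) + 1 := by
      have := sqrt_add_le' hm'pos.le (zero_le_one (α := ℝ))
      simpa [Real.sqrt_one] using this
    have h3 : Real.sqrt (4 / (η ^ 2 * ‖a‖ ^ 2) + 8 * R ^ 2 / ‖a‖ ^ 2)
        ≤ 2/(η*‖a‖) + 2*Real.sqrt 2*R/‖a‖ := by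
      have h4 := sqrt_add_le' (x := 4 / (η ^ 2 * ‖a‖ ^ 2)) (y := 8 * R ^ 2 / ‖a‖ ^ 2)
        (by positivity) (by positivity)
      have h5 : Real.sqrt (4 / (η ^ 2 * ‖a‖ ^ 2)) = 2/(η*‖a‖) := by
        rw [show 4 / (η ^ 2 * ‖a‖ ^ 2) = (2/(η*‖a‖))^2 by field_simp; ring,
          Real.sqrt_sq (by positivity)]
      have h2' : Real.sqrt 2 ^ 2 = 2 := Real.sq_sqrt (by norm_num)
      have h6 : Real.sqrt (8 * R ^ 2 / ‖a‖ ^ 2) = 2*Real.sqrt 2*R/‖a‖ := by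
        rw [show 8 * R ^ 2 / ‖a‖ ^ 2 = (2*Real.sqrt 2*R/‖a‖)^2 by
          rw [div_pow, mul_pow, mul_pow, h2']; ring,
          Real.sqrt_sq (by positivity)]
      rw [h5, h6] at h4
      exact h4
    linarith
  have hC2 : (0:ℝ) ≤ 1/(2*η) + 2*η*L^2 + Real.sqrt (2*Real.pi)*R := by positivity
  have hC1 : 1/(2*η) + 2*η*L^2 ≤ 1/(2*η) + 2*η*L^2 + Real.sqrt (2*Real.pi)*R := by
    have : 0 ≤ Real.sqrt (2*Real.pi)*R := mul_nonneg (Real.sqrt_nonneg _) hR0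
    linarith
  have hstep : (1/(2*η) + 2*η*L^2) * Real.sqrt M
      ≤ (1/(2*η) + 2*η*L^2 + Real.sqrt (2*Real.pi)*R)
        * (1 + 2/(η*‖a‖) + 2*Real.sqrt 2*R/‖a‖) :=
    mul_le_mul hC1 hFle (Real.sqrt_nonneg _) hC2
  calc ∑ i ∈ Icc 1 M, ∫ ω, ⟪a, x i ω - xs⟫ ∂μ
      ≤ (1/(2*η) + 2*η*L^2) * Real.sqrt M := hmain
    _ ≤ (1/(2*η) + 2*η*L^2 + Real.sqrt (2*Real.pi)*R)
        * (1 + 2/(η*‖a‖) + 2*Real.sqrt 2*R/‖a‖) := hstep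
    _ ≤ 2 * L + (1 / (2 * η) + 2 * η * L ^ 2 + Real.sqrt (2 * Real.pi) * R) *
        (1 + 2 / (η * ‖a‖) + 2 * Real.sqrt 2 * R / ‖a‖) := by linarith
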